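/- arXiv:1603.06957 — 4 statements merged into one kernel-verified Lean document; each statement's English description precedes it below -/
import Mathlib

section
/- For every integer n ≥ 1, the infinite product ∏_{k=1}^{∞}(1 - q^k) equals the sum ∑_{j=-∞}^{∞} (-1)^j q^{j(3j-1)/2} as formal power series in q (Euler's pentagonal number theorem), and hence their coefficients agree in every degree. -/
open Finset PowerSeries
open scoped Classical

namespace Pent

noncomputable def fmin (S : Finset ℕ) : ℕ := sInf (S : Set ℕ)
def fmax (S : Finset ℕ) : ℕ := S.sup id
noncomputable def stair (S : Finset ℕ) : ℕ := sInf {k : ℕ | 0 < k ∧ fmax S - k ∉ S}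

def pentSet (j : ℤ) : Finset ℕ :=
  if 0 ≤ j then Finset.Ico j.toNat (2 * j.toNat)
  else Finset.Ico ((-j).toNat + 1) (2 * (-j).toNat + 1)

def IsPent (S : Finset ℕ) : Prop := ∃ j : ℤ, S = pentSet j

noncomputable def franklin (S : Finset ℕ) : Finset ℕ :=
  if fmin S ≤ stair S then
    insert (fmax S + 1) ((S.erase (fmin S)).erase (fmax S + 1 - fmin S))
  else
    insert (stair S) (insert (fmax S - stair S) (S.erase (fmax S)))

lemma franklin_if (S : Finset ℕ) : franklin S =
    if fmin S ≤ stair S then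
      insert (fmax S + 1) ((S.erase (fmin S)).erase (fmax S + 1 - fmin S))
    else
      insert (stair S) (insert (fmax S - stair S) (S.erase (fmax S))) := rfl

lemma fmin_mem {S : Finset ℕ} (h : S.Nonempty) : fmin S ∈ S := by
  have h' : (S : Set ℕ).Nonempty := by exact_mod_cast h
  simpa [fmin] using Nat.sInf_mem h'

lemma fmin_le {S : Finset ℕ} {x : ℕ} (h : x ∈ S) : fmin S ≤ x := Nat.sInf_le (by simpa)

lemma le_fmax {S : Finset ℕ} {x : ℕ} (h : x ∈ S) : x ≤ fmax S := Finset.le_sup (f := id) h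

lemma fmax_mem {S : Finset ℕ} (h : S.Nonempty) : fmax S ∈ S := by
  obtain ⟨b, hb, he⟩ := Finset.exists_mem_eq_sup S h id
  rw [fmax, he]; exact hb

lemma fmax_eq {S : Finset ℕ} {m : ℕ} (hm : m ∈ S) (h : ∀ x ∈ S, x ≤ m) : fmax S = m :=
  le_antisymm (Finset.sup_le h) (le_fmax hm)

lemma fmin_eq {S : Finset ℕ} {s : ℕ} (hs : s ∈ S) (h : ∀ x ∈ S, s ≤ x) : fmin S = s :=
  le_antisymm (fmin_le hs) (h _ (fmin_mem ⟨s, hs⟩))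

lemma stair_spec {S : Finset ℕ} (h0 : 0 ∉ S) (hne : S.Nonempty) :
    0 < stair S ∧ fmax S - stair S ∉ S ∧ stair S ≤ fmax S := by
  have hmem : fmax S ∈ {k : ℕ | 0 < k ∧ fmax S - k ∉ S} := by
    have h1 : 0 < fmax S := by
      rcases hne with ⟨x, hx⟩
      have hle := le_fmax hx
      have : x ≠ 0 := fun h => h0 (h ▸ hx)
      omega
    refine ⟨h1, by simpa using h0⟩
  have hnes : {k : ℕ | 0 < k ∧ fmax S - k ∉ S}.Nonempty := ⟨_, hmem⟩
  obtain ⟨h1, h2⟩ := Nat.sInf_mem hnes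
  exact ⟨h1, h2, Nat.sInf_le hmem⟩

lemma stair_step {S : Finset ℕ} : ∀ k, 0 < k → k < stair S → fmax S - k ∈ S := by
  intro k hk hks
  by_contra hc
  have hle : stair S ≤ k :=
    Nat.sInf_le (show k ∈ {k : ℕ | 0 < k ∧ fmax S - k ∉ S} from ⟨hk, hc⟩)
  omega

lemma mem_of_stair_lt {S : Finset ℕ} (h0 : 0 ∉ S) (hne : S.Nonempty) :
    ∀ x, fmax S - stair S < x → x ≤ fmax S → x ∈ S := by
  intro x h1 h2
  have hle := (stair_spec h0 hne).2.2
  rcases eq_or_lt_of_le h2 with he | hlt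
  · exact he ▸ fmax_mem hne
  · have heq : fmax S - (fmax S - x) = x := by omega
    have h3 : fmax S - x < stair S := by omega
    have := stair_step (S := S) (fmax S - x) (by omega) h3
    rwa [heq] at this

lemma stair_eq {S : Finset ℕ} (h0 : 0 ∉ S) (hne : S.Nonempty) {t : ℕ} (ht : 0 < t)
    (h1 : fmax S - t ∉ S)
    (h2 : ∀ k, 0 < k → k < t → fmax S - k ∈ S) : stair S = t := by
  have hle : stair S ≤ t := Nat.sInf_le ⟨ht, h1⟩
  rcases eq_or_lt_of_le hle with he | hlt
  · exact he
  · obtain ⟨p1, p2, _⟩ := stair_spec h0 hne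
    exact absurd (h2 _ p1 hlt) p2

lemma fmin_Ico {a b : ℕ} (h : a < b) : fmin (Finset.Ico a b) = a :=
  fmin_eq (by simp [h]) (fun x hx => (Finset.mem_Ico.mp hx).1)

lemma fmax_Ico {a b : ℕ} (h : a < b) : fmax (Finset.Ico a b) = b - 1 :=
  fmax_eq (by simp; omega) (fun x hx => by have := Finset.mem_Ico.mp hx; omega)

lemma stair_Ico {a b : ℕ} (h : a < b) (ha : 0 < a) : stair (Finset.Ico a b) = b - a := by
  have h0 : (0 : ℕ) ∉ Finset.Ico a b := by simp; omega
  have hne : (Finset.Ico a b).Nonempty := by rw [Finset.nonempty_Ico]; omega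
  refine stair_eq h0 hne (t := b - a) (by omega) ?_ ?_
  · rw [fmax_Ico h]; simp; omega
  · intro k hk hks
    rw [fmax_Ico h] at *
    simp only [Finset.mem_Ico]
    omega

lemma pent_of_interval {a b : ℕ} (ha : 0 < a) (hab : a < b)
    (h : b = 2 * a ∨ (b = 2 * a - 1 ∧ 2 ≤ a)) : IsPent (Finset.Ico a b) := by
  rcases h with h | ⟨h, ha2⟩
  · refine ⟨(a : ℤ), ?_⟩
    rw [pentSet, if_pos (by positivity), Int.toNat_natCast, h]
  · refine ⟨-((a : ℤ) - 1), ?_⟩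
    rw [pentSet, if_neg (by omega), neg_neg]
    have : ((a : ℤ) - 1).toNat = a - 1 := by omega
    rw [this]
    congr 1 <;> omega

lemma pent_elim {S : Finset ℕ} (hp : IsPent S) (hne : S.Nonempty) :
    ∃ a b : ℕ, 0 < a ∧ a < b ∧ S = Finset.Ico a b ∧ (b = 2 * a ∨ b = 2 * a - 1) := by
  obtain ⟨j, hj⟩ := hp
  rw [pentSet] at hj
  split_ifs at hj with hj0
  · refine ⟨j.toNat, 2 * j.toNat, ?_, ?_, hj, Or.inl rfl⟩ <;>
    · subst hj
      rcases hne with ⟨x, hx⟩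
      simp only [Finset.mem_Ico] at hx
      omega
  · refine ⟨(-j).toNat + 1, 2 * (-j).toNat + 1, by omega, ?_, hj, Or.inr (by omega)⟩
    have : 0 < (-j).toNat := by omega
    omega


lemma gauss (a n : ℕ) :
    2 * (∑ x ∈ Finset.Ico a (a + n), (x : ℤ)) = (a + n) * ((a : ℤ) + n - 1) - a * ((a : ℤ) - 1) := by
  induction n with
  | zero => simp
  | succ n ih =>
    rw [show a + (n + 1) = (a + n) + 1 from rfl, Finset.sum_Ico_succ_top (by omega)]
    push_cast
    push_cast at ih
    linarith

lemma pentSum (j : ℤ) : 2 * (∑ x ∈ pentSet j, (x : ℤ)) = j * (3 * j - 1) := by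
  rw [pentSet]; split_ifs with h
  · rw [show 2 * j.toNat = j.toNat + j.toNat by ring, gauss]
    have ht : (j.toNat : ℤ) = j := Int.toNat_of_nonneg h
    rw [ht]; ring
  · rw [show 2 * (-j).toNat + 1 = ((-j).toNat + 1) + (-j).toNat by ring, gauss]
    have ht : ((-j).toNat : ℤ) = -j := Int.toNat_of_nonneg (by omega)
    push_cast
    push_cast at ht
    rw [ht]; ring

lemma pentCard (j : ℤ) : ((-1 : ℤ)) ^ (pentSet j).card = (j.negOnePow : ℤ) := by
  rw [pentSet]; split_ifs with h
  · rw [Nat.card_Ico, show 2 * j.toNat - j.toNat = j.toNat by omega,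
      ← Int.coe_negOnePow_natCast, Int.toNat_of_nonneg h]
  · rw [Nat.card_Ico, show 2 * (-j).toNat + 1 - ((-j).toNat + 1) = (-j).toNat by omega,
      ← Int.coe_negOnePow_natCast, Int.toNat_of_nonneg (by omega : (0:ℤ) ≤ -j),
      Int.negOnePow_neg]

lemma part1 (d M : ℕ) (h : d ≤ M) :
    (PowerSeries.coeff (R := ℤ) d) (∏ k ∈ Finset.Icc 1 M, (1 - PowerSeries.X ^ k)) =
    (PowerSeries.coeff (R := ℤ) d) (∏ k ∈ Finset.Icc 1 d, (1 - PowerSeries.X ^ k)) := by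
  induction M with
  | zero => have hd : d = 0 := by omega
            subst hd; rfl
  | succ n ih =>
    rcases eq_or_lt_of_le h with he | hlt
    · rw [he]
    · have hd : d ≤ n := by omega
      rw [Finset.prod_Icc_succ_top (by omega : 1 ≤ n + 1), mul_sub, mul_one, map_sub,
        PowerSeries.coeff_mul_X_pow', if_neg (by omega)]
      simpa using ih hd

lemma expansion (d : ℕ) :
    (PowerSeries.coeff (R := ℤ) d) (∏ k ∈ Finset.Icc 1 d, (1 - PowerSeries.X ^ k)) =
    ∑ S ∈ (Finset.Icc 1 d).powerset, (if ∑ x ∈ S, x = d then (-1 : ℤ) ^ S.card else 0) := by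
  have h1 : ∀ k ∈ Finset.Icc 1 d, (1 - (PowerSeries.X : PowerSeries ℤ) ^ k) =
      (-(PowerSeries.X ^ k)) + 1 := fun k _ => by ring
  rw [Finset.prod_congr rfl h1, Finset.prod_add]
  simp only [Finset.prod_const_one, mul_one]
  rw [map_sum]
  refine Finset.sum_congr rfl ?_
  intro t _
  have h2 : ∏ i ∈ t, (-(PowerSeries.X : PowerSeries ℤ) ^ i) =
      PowerSeries.C (R := ℤ) ((-1) ^ t.card) * PowerSeries.X ^ (∑ i ∈ t, i) := by
    calc ∏ i ∈ t, (-(PowerSeries.X : PowerSeries ℤ) ^ i)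
        = ∏ i ∈ t, ((-1) * (PowerSeries.X : PowerSeries ℤ) ^ i) :=
          Finset.prod_congr rfl fun i _ => by ring
      _ = (-1) ^ t.card * ∏ i ∈ t, (PowerSeries.X : PowerSeries ℤ) ^ i := by
          rw [Finset.prod_mul_distrib, Finset.prod_const]
      _ = _ := by
          rw [Finset.prod_pow_eq_pow_sum]
          congr 1
          simp [map_pow]
  rw [h2, PowerSeries.coeff_C_mul, PowerSeries.coeff_X_pow]
  by_cases hc : (∑ x ∈ t, x) = d
  · simp [hc]
  · simp [hc, Ne.symm hc]


lemma caseA {d : ℕ} {S : Finset ℕ} (hsub : S ⊆ Finset.Icc 1 d) (hsum : ∑ x ∈ S, x = d)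
    (hne : S.Nonempty) (hnp : ¬ IsPent S) (hAB : fmin S ≤ stair S) :
    franklin S ⊆ Finset.Icc 1 d ∧ (∑ x ∈ franklin S, x = d) ∧ (franklin S).Nonempty ∧
    ¬ IsPent (franklin S) ∧ (franklin S).card + 1 = S.card ∧ franklin (franklin S) = S := by
  have h0 : (0 : ℕ) ∉ S := fun h => by simpa using (Finset.mem_Icc.mp (hsub h)).1
  set s := fmin S with hs_def
  set m := fmax S with hm_def
  set σ := stair S with hσ_def
  have hs : s ∈ S := fmin_mem hne
  have hm : m ∈ S := fmax_mem hne
  have h1s : 1 ≤ s := (Finset.mem_Icc.mp (hsub hs)).1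
  have hsm : s ≤ m := fmin_le hm
  obtain ⟨hσ1, hσ2, hσ3⟩ := stair_spec h0 hne
  have hmd : m ≤ d := (Finset.mem_Icc.mp (hsub hm)).2
  have h2s : 2 * s ≤ m := by
    by_contra hcon
    push_neg at hcon
    have hSeq : S = Finset.Ico s (m + 1) := by
      apply Finset.Subset.antisymm
      · intro x hx
        exact Finset.mem_Ico.mpr ⟨fmin_le hx, by have := le_fmax hx; omega⟩
      · intro x hx
        rw [Finset.mem_Ico] at hx
        exact mem_of_stair_lt h0 hne x (by omega) (by omega)
    have hst : σ = m + 1 - s := by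
      rw [hσ_def, hSeq, stair_Ico (by omega) (by omega)]
    have hm_eq : m = 2 * s - 1 := by omega
    exact hnp (by rw [hSeq]; exact pent_of_interval h1s (by omega) (Or.inl (by omega)))
  have hslt : s < m := by omega
  have hsmd : s + m ≤ d := by
    have hpair : ({s, m} : Finset ℕ) ⊆ S := by
      intro x hx
      simp only [Finset.mem_insert, Finset.mem_singleton] at hx
      rcases hx with rfl | rfl <;> assumption
    calc s + m = ∑ x ∈ ({s, m} : Finset ℕ), x := (Finset.sum_pair (f := fun x => x) (show s ≠ m by omega)).symm
      _ ≤ ∑ x ∈ S, x := Finset.sum_le_sum_of_subset hpair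
      _ = d := hsum
  have hmem1 : m + 1 - s ∈ S := mem_of_stair_lt h0 hne _ (by omega) (by omega)
  have hm1 : m + 1 ∉ S := fun h => by have := le_fmax h; omega
  have hφ : franklin S = insert (m + 1) ((S.erase s).erase (m + 1 - s)) := by
    rw [franklin_if S, if_pos hAB]
  have hmemS' : ∀ x, x ∈ franklin S ↔ (x = m + 1 ∨ (x ∈ S ∧ x ≠ s ∧ x ≠ m + 1 - s)) := by
    intro x
    rw [hφ, Finset.mem_insert, Finset.mem_erase, Finset.mem_erase]
    tauto
  have hnm : m + 1 ∉ (S.erase s).erase (m + 1 - s) :=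
    fun h => hm1 (Finset.mem_of_mem_erase (Finset.mem_of_mem_erase h))
  have hmm1 : m + 1 - s ∈ S.erase s := Finset.mem_erase.mpr ⟨by omega, hmem1⟩
  have hsub' : franklin S ⊆ Finset.Icc 1 d := by
    intro x hx
    rcases (hmemS' x).mp hx with rfl | ⟨hxS, _, _⟩
    · exact Finset.mem_Icc.mpr ⟨by omega, by omega⟩
    · exact hsub hxS
  have hsum' : ∑ x ∈ franklin S, x = d := by
    have e1 : ∑ x ∈ (S.erase s).erase (m + 1 - s), x + (m + 1 - s) = ∑ x ∈ S.erase s, x :=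
      Finset.sum_erase_add _ _ hmm1
    have e2 : ∑ x ∈ S.erase s, x + s = ∑ x ∈ S, x := Finset.sum_erase_add _ _ hs
    rw [hφ, Finset.sum_insert hnm]
    omega
  have hne' : (franklin S).Nonempty := ⟨m + 1, (hmemS' _).mpr (Or.inl rfl)⟩
  have h0' : (0 : ℕ) ∉ franklin S := by
    intro h
    rcases (hmemS' 0).mp h with h | h
    · omega
    · exact h0 h.1
  have hfmax' : fmax (franklin S) = m + 1 := by
    apply fmax_eq ((hmemS' _).mpr (Or.inl rfl))
    intro x hx
    rcases (hmemS' x).mp hx with rfl | ⟨hxS, _, _⟩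
    · omega
    · have := le_fmax hxS; omega
  have hstair' : stair (franklin S) = s := by
    apply stair_eq h0' hne' (by omega : 0 < s)
    · rw [hfmax']
      intro hmem
      rcases (hmemS' _).mp hmem with he | ⟨_, _, hc⟩
      · omega
      · exact hc rfl
    · intro k hk hks
      rw [hfmax']
      apply (hmemS' _).mpr
      right
      refine ⟨mem_of_stair_lt h0 hne _ (by omega) (by omega), by omega, by omega⟩
  have hmin' : s < fmin (franklin S) := by
    rcases (hmemS' _).mp (fmin_mem hne') with he | ⟨hxS, hxs, _⟩
    · omega
    · have := fmin_le hxS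
      omega
  have hnp' : ¬ IsPent (franklin S) := by
    intro hp
    obtain ⟨a, b, ha, hab, hEq, hb⟩ := pent_elim hp hne'
    have hfa : fmax (franklin S) = b - 1 := by rw [hEq]; exact fmax_Ico hab
    have hsa : stair (franklin S) = b - a := by rw [hEq]; exact stair_Ico hab ha
    rw [hfmax'] at hfa
    rw [hstair'] at hsa
    omega
  have hcard' : (franklin S).card + 1 = S.card := by
    rw [hφ, Finset.card_insert_of_notMem hnm, Finset.card_erase_of_mem hmm1,
      Finset.card_erase_of_mem hs]
    have : 2 ≤ S.card := Finset.one_lt_card.mpr ⟨s, hs, m, hm, by omega⟩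
    omega
  refine ⟨hsub', hsum', hne', hnp', hcard', ?_⟩
  have hcond : ¬ fmin (franklin S) ≤ stair (franklin S) := by rw [hstair']; omega
  rw [franklin_if (franklin S), if_neg hcond, hfmax', hstair', hφ, Finset.erase_insert hnm,
    Finset.insert_erase hmm1, Finset.insert_erase hs]


lemma caseB {d : ℕ} {S : Finset ℕ} (hsub : S ⊆ Finset.Icc 1 d) (hsum : ∑ x ∈ S, x = d)
    (hne : S.Nonempty) (hnp : ¬ IsPent S) (hAB : ¬ fmin S ≤ stair S) :
    franklin S ⊆ Finset.Icc 1 d ∧ (∑ x ∈ franklin S, x = d) ∧ (franklin S).Nonempty ∧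
    ¬ IsPent (franklin S) ∧ (franklin S).card = S.card + 1 ∧ franklin (franklin S) = S := by
  have h0 : (0 : ℕ) ∉ S := fun h => by simpa using (Finset.mem_Icc.mp (hsub h)).1
  set s := fmin S with hs_def
  set m := fmax S with hm_def
  set σ := stair S with hσ_def
  have hs : s ∈ S := fmin_mem hne
  have hm : m ∈ S := fmax_mem hne
  have h1s : 1 ≤ s := (Finset.mem_Icc.mp (hsub hs)).1
  have hsm : s ≤ m := fmin_le hm
  obtain ⟨hσ1, hσ2, hσ3⟩ := stair_spec h0 hne
  have hmd : m ≤ d := (Finset.mem_Icc.mp (hsub hm)).2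
  push_neg at hAB
  have hσm : σ < m := by
    rcases eq_or_lt_of_le hσ3 with he | h
    · have h1m : (1 : ℕ) ∈ S := mem_of_stair_lt h0 hne 1 (by omega) (by omega)
      have := fmin_le h1m
      omega
    · exact h
  have h2σ : 2 * σ < m := by
    by_contra hcon
    push_neg at hcon
    rcases eq_or_lt_of_le hcon with he | hlt
    · have hSeq : S = Finset.Ico (σ + 1) (m + 1) := by
        apply Finset.Subset.antisymm
        · intro x hx
          have h1 := fmin_le hx
          have h2 := le_fmax hx
          exact Finset.mem_Ico.mpr ⟨by omega, by omega⟩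
        · intro x hx
          rw [Finset.mem_Ico] at hx
          exact mem_of_stair_lt h0 hne x (by omega) (by omega)
      exact hnp (hSeq ▸ pent_of_interval (by omega) (by omega)
        (Or.inr ⟨by omega, by omega⟩))
    · have hσS : σ ∈ S := mem_of_stair_lt h0 hne σ (by omega) (by omega)
      have := fmin_le hσS
      omega
  have hσnot : σ ∉ S := fun h => by have := fmin_le h; omega
  have hφ : franklin S = insert σ (insert (m - σ) (S.erase m)) := by
    rw [franklin_if S, if_neg (by omega)]
  have hmem' : ∀ x, x ∈ franklin S ↔ (x = σ ∨ x = m - σ ∨ (x ∈ S ∧ x ≠ m)) := by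
    intro x
    rw [hφ, Finset.mem_insert, Finset.mem_insert, Finset.mem_erase]
    tauto
  have hn1 : m - σ ∉ S.erase m := fun h => hσ2 (Finset.mem_of_mem_erase h)
  have hn2 : σ ∉ insert (m - σ) (S.erase m) := by
    intro h
    rcases Finset.mem_insert.mp h with he | hh
    · omega
    · exact hσnot (Finset.mem_of_mem_erase hh)
  have hsub' : franklin S ⊆ Finset.Icc 1 d := by
    intro x hx
    rcases (hmem' x).mp hx with rfl | rfl | ⟨hxS, _⟩
    · exact Finset.mem_Icc.mpr ⟨by omega, by omega⟩
    · exact Finset.mem_Icc.mpr ⟨by omega, by omega⟩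
    · exact hsub hxS
  have hsum' : ∑ x ∈ franklin S, x = d := by
    have e1 : ∑ x ∈ S.erase m, x + m = ∑ x ∈ S, x := Finset.sum_erase_add _ _ hm
    rw [hφ, Finset.sum_insert hn2, Finset.sum_insert hn1]
    omega
  have hne' : (franklin S).Nonempty := ⟨σ, (hmem' _).mpr (Or.inl rfl)⟩
  have h0' : (0 : ℕ) ∉ franklin S := by
    intro h
    rcases (hmem' 0).mp h with he | he | ⟨hxS, _⟩
    · omega
    · omega
    · exact h0 hxS
  have hfmax' : fmax (franklin S) = m - 1 := by
    apply fmax_eq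
    · by_cases hσe : σ = 1
      · exact (hmem' _).mpr (Or.inr (Or.inl (by omega)))
      · exact (hmem' _).mpr (Or.inr (Or.inr
          ⟨mem_of_stair_lt h0 hne _ (by omega) (by omega), by omega⟩))
    · intro x hx
      rcases (hmem' x).mp hx with rfl | rfl | ⟨hxS, hxm⟩
      · omega
      · omega
      · have := le_fmax hxS; omega
  have hfmin' : fmin (franklin S) = σ := by
    apply fmin_eq ((hmem' _).mpr (Or.inl rfl))
    intro x hx
    rcases (hmem' x).mp hx with rfl | rfl | ⟨hxS, _⟩
    · omega
    · omega
    · have := fmin_le hxS; omega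
  have hstairge : σ ≤ stair (franklin S) := by
    by_contra hcon
    push_neg at hcon
    obtain ⟨q1, q2, q3⟩ := stair_spec h0' hne'
    rw [hfmax'] at q2
    apply q2
    by_cases he : m - 1 - stair (franklin S) = m - σ
    · exact (hmem' _).mpr (Or.inr (Or.inl he))
    · exact (hmem' _).mpr (Or.inr (Or.inr
        ⟨mem_of_stair_lt h0 hne _ (by omega) (by omega), by omega⟩))
  have hcond : fmin (franklin S) ≤ stair (franklin S) := by rw [hfmin']; exact hstairge
  have hnp' : ¬ IsPent (franklin S) := by
    intro hp
    obtain ⟨a, b, ha, hab, hEq, hb⟩ := pent_elim hp hne'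
    have ha' : fmin (franklin S) = a := by rw [hEq]; exact fmin_Ico hab
    have hb' : fmax (franklin S) = b - 1 := by rw [hEq]; exact fmax_Ico hab
    rw [hfmin'] at ha'
    rw [hfmax'] at hb'
    omega
  have hcard' : (franklin S).card = S.card + 1 := by
    rw [hφ, Finset.card_insert_of_notMem hn2, Finset.card_insert_of_notMem hn1,
      Finset.card_erase_of_mem hm]
    have : 1 ≤ S.card := Finset.card_pos.mpr hne
    omega
  refine ⟨hsub', hsum', hne', hnp', hcard', ?_⟩
  rw [franklin_if (franklin S), if_pos hcond, hfmax', hfmin',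
    show m - 1 + 1 = m by omega, hφ, Finset.erase_insert hn2, Finset.erase_insert hn1,
    Finset.insert_erase hm]


lemma franklin_spec {d : ℕ} {S : Finset ℕ} (hsub : S ⊆ Finset.Icc 1 d)
    (hsum : ∑ x ∈ S, x = d) (hne : S.Nonempty) (hnp : ¬ IsPent S) :
    franklin S ⊆ Finset.Icc 1 d ∧ (∑ x ∈ franklin S, x = d) ∧ (franklin S).Nonempty ∧
    ¬ IsPent (franklin S) ∧ franklin (franklin S) = S ∧
    ((-1 : ℤ)) ^ (franklin S).card = -((-1) ^ S.card) ∧ franklin S ≠ S := by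
  by_cases hAB : fmin S ≤ stair S
  · obtain ⟨a, b, c, e, f, g⟩ := caseA hsub hsum hne hnp hAB
    refine ⟨a, b, c, e, g, ?_, ?_⟩
    · rw [← f, pow_succ]; ring
    · intro h; rw [h] at f; omega
  · obtain ⟨a, b, c, e, f, g⟩ := caseB hsub hsum hne hnp hAB
    refine ⟨a, b, c, e, g, ?_, ?_⟩
    · rw [f, pow_succ]; ring
    · intro h; rw [h] at f; omega

lemma empty_pent : IsPent (∅ : Finset ℕ) := ⟨0, by simp [pentSet]⟩

lemma moving_zero (d : ℕ) :
    ∑ S ∈ (((Finset.Icc 1 d).powerset.filter (fun S => ∑ x ∈ S, x = d)).filter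
      (fun S => ¬ IsPent S)), ((-1 : ℤ)) ^ S.card = 0 := by
  apply Finset.sum_involution (fun S _ => franklin S)
  · intro S hS
    simp only [Finset.mem_filter, Finset.mem_powerset] at hS
    obtain ⟨⟨h1, h2⟩, h3⟩ := hS
    have hne : S.Nonempty := Finset.nonempty_iff_ne_empty.mpr
      (fun h => h3 (h ▸ empty_pent))
    obtain ⟨_, _, _, _, _, hsgn, _⟩ := franklin_spec h1 h2 hne h3
    rw [hsgn]; ring
  · intro S hS _
    simp only [Finset.mem_filter, Finset.mem_powerset] at hS
    obtain ⟨⟨h1, h2⟩, h3⟩ := hS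
    have hne : S.Nonempty := Finset.nonempty_iff_ne_empty.mpr
      (fun h => h3 (h ▸ empty_pent))
    exact (franklin_spec h1 h2 hne h3).2.2.2.2.2.2
  · intro S hS
    simp only [Finset.mem_filter, Finset.mem_powerset] at hS ⊢
    obtain ⟨⟨h1, h2⟩, h3⟩ := hS
    have hne : S.Nonempty := Finset.nonempty_iff_ne_empty.mpr
      (fun h => h3 (h ▸ empty_pent))
    obtain ⟨a, b, _, e, _, _, _⟩ := franklin_spec h1 h2 hne h3
    exact ⟨⟨a, b⟩, e⟩
  · intro S hS
    simp only [Finset.mem_filter, Finset.mem_powerset] at hS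
    obtain ⟨⟨h1, h2⟩, h3⟩ := hS
    have hne : S.Nonempty := Finset.nonempty_iff_ne_empty.mpr
      (fun h => h3 (h ▸ empty_pent))
    exact (franklin_spec h1 h2 hne h3).2.2.2.2.1

lemma cond_iff {d : ℕ} {j : ℤ} : (j * (3 * j - 1)) / 2 = (d : ℤ) ↔ j * (3 * j - 1) = 2 * d := by
  have hev : Even (j * (3 * j - 1)) := by
    rcases Int.even_or_odd j with h | h
    · exact h.mul_right _
    · have h2 : Even (3 * j - 1) := by
        rcases h with ⟨k, hk⟩
        exact ⟨3 * k + 1, by rw [hk]; ring⟩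
      exact h2.mul_left _
  have he := Int.even_iff.mp hev
  omega

lemma abs_le_of_pent {d : ℕ} {j : ℤ} (h : j * (3 * j - 1) = 2 * d) :
    -(d : ℤ) ≤ j ∧ j ≤ d := by
  have h1 : 0 ≤ j * (j - 1) := by
    rcases le_or_gt 1 j with hj | hj
    · exact mul_nonneg (by linarith) (by linarith)
    · nlinarith [mul_nonneg (by linarith : (0:ℤ) ≤ -j) (by linarith : (0:ℤ) ≤ 1 - j)]
  have h2 : 0 ≤ j * (3 * j + 1) := by
    rcases le_or_gt 0 j with hj | hj
    · exact mul_nonneg hj (by linarith)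
    · nlinarith [mul_nonneg (by linarith : (0:ℤ) ≤ -j) (by linarith : (0:ℤ) ≤ -(3 * j + 1))]
  constructor <;> nlinarith

lemma sum_pentSet_nat {d : ℕ} {j : ℤ} (h : j * (3 * j - 1) = 2 * d) :
    ∑ x ∈ pentSet j, x = d := by
  have h2 := pentSum j
  rw [h] at h2
  have h3 : (2 : ℤ) * ((∑ x ∈ pentSet j, x : ℕ) : ℤ) = 2 * d := by
    push_cast
    exact h2
  omega

lemma pentSet_subset {d : ℕ} {j : ℤ} (h : j * (3 * j - 1) = 2 * d) :
    pentSet j ⊆ Finset.Icc 1 d := by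
  intro x hx
  rw [pentSet] at hx
  split_ifs at hx with h0
  · rw [Finset.mem_Ico] at hx
    have ht : (j.toNat : ℤ) = j := Int.toNat_of_nonneg h0
    have h1 : 1 ≤ j.toNat := by omega
    have hd : 2 * (d : ℤ) = (j.toNat : ℤ) * (3 * (j.toNat : ℤ) - 1) := by rw [ht]; omega
    have hx' : (x : ℤ) < 2 * (j.toNat : ℤ) := by exact_mod_cast hx.2
    have hT : (1 : ℤ) ≤ (j.toNat : ℤ) := by exact_mod_cast h1
    have : (x : ℤ) ≤ d := by
      nlinarith [mul_nonneg (by linarith : (0:ℤ) ≤ (j.toNat : ℤ) - 1)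
        (by linarith : (0:ℤ) ≤ 3 * (j.toNat : ℤ) - 2)]
    exact Finset.mem_Icc.mpr ⟨by omega, by exact_mod_cast this⟩
  · rw [Finset.mem_Ico] at hx
    have ht : ((-j).toNat : ℤ) = -j := Int.toNat_of_nonneg (by omega)
    have h1 : 1 ≤ (-j).toNat := by omega
    have hd : 2 * (d : ℤ) = ((-j).toNat : ℤ) * (3 * ((-j).toNat : ℤ) + 1) := by
      rw [ht]; ring_nf; linarith [h]
    have hx' : (x : ℤ) ≤ 2 * ((-j).toNat : ℤ) := by exact_mod_cast Nat.lt_succ_iff.mp hx.2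
    have hT : (1 : ℤ) ≤ ((-j).toNat : ℤ) := by exact_mod_cast h1
    have : (x : ℤ) ≤ d := by
      nlinarith [mul_nonneg (by linarith : (0:ℤ) ≤ ((-j).toNat : ℤ) - 1)
        (by linarith : (0:ℤ) ≤ 3 * ((-j).toNat : ℤ))]
    exact Finset.mem_Icc.mpr ⟨by omega, by exact_mod_cast this⟩

lemma fixed_sum (d : ℕ) :
    ∑ j ∈ ((Finset.Icc (-(d : ℤ)) (d : ℤ)).filter (fun j => (j * (3 * j - 1)) / 2 = (d : ℤ))),
      (j.negOnePow : ℤ) =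
    ∑ S ∈ (((Finset.Icc 1 d).powerset.filter (fun S => ∑ x ∈ S, x = d)).filter
      (fun S => IsPent S)), ((-1 : ℤ)) ^ S.card := by
  apply Finset.sum_bij (fun j _ => pentSet j)
  · intro j hj
    simp only [Finset.mem_filter, Finset.mem_Icc] at hj
    have hc : j * (3 * j - 1) = 2 * d := cond_iff.mp hj.2
    simp only [Finset.mem_filter, Finset.mem_powerset]
    exact ⟨⟨pentSet_subset hc, sum_pentSet_nat hc⟩, ⟨j, rfl⟩⟩
  · intro j1 hj1 j2 hj2 hEq
    simp only [Finset.mem_filter, Finset.mem_Icc] at hj1 hj2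
    have hc1 : j1 * (3 * j1 - 1) = 2 * d := cond_iff.mp hj1.2
    have hc2 : j2 * (3 * j2 - 1) = 2 * d := cond_iff.mp hj2.2
    have key : (j1 - j2) * (3 * (j1 + j2) - 1) = 0 := by linear_combination hc1 - hc2
    rcases mul_eq_zero.mp key with h | h
    · omega
    · omega
  · intro S hS
    simp only [Finset.mem_filter, Finset.mem_powerset] at hS
    obtain ⟨⟨h1, h2⟩, j, rfl⟩ := hS
    have h3 : (2 : ℤ) * ((∑ x ∈ pentSet j, x : ℕ) : ℤ) = j * (3 * j - 1) := by
      push_cast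
      exact pentSum j
    have hc : j * (3 * j - 1) = 2 * d := by omega
    obtain ⟨hl, hr⟩ := abs_le_of_pent hc
    refine ⟨j, ?_, rfl⟩
    simp only [Finset.mem_filter, Finset.mem_Icc]
    exact ⟨⟨hl, hr⟩, cond_iff.mpr hc⟩
  · intro j hj
    exact (pentCard j).symm

lemma part2 (d : ℕ) :
    (PowerSeries.coeff (R := ℤ) d) (∏ k ∈ Finset.Icc 1 d, (1 - PowerSeries.X ^ k)) =
    ∑ j ∈ Finset.Icc (-(d : ℤ)) (d : ℤ),
      if (j * (3 * j - 1)) / 2 = (d : ℤ) then (j.negOnePow : ℤ) else 0 := by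
  rw [expansion d, ← Finset.sum_filter, ← Finset.sum_filter,
    ← Finset.sum_filter_add_sum_filter_not
      ((Finset.Icc 1 d).powerset.filter (fun S => ∑ x ∈ S, x = d))
      (fun S => IsPent S) (fun S => ((-1 : ℤ)) ^ S.card),
    moving_zero d, add_zero, ← fixed_sum d]

end Pent



/- Euler's pentagonal number theorem in ℤ[[q]].
The infinite product ∏_{k=1}^{∞}(1 - q^k) is represented through its truncations:
the first conjunct says that the coefficient of q^d in ∏_{k=1}^{M}(1 - q^k) is
independent of M once M ≥ d (so the infinite product is well defined coefficientwise),
and the second conjunct says that in every degree d this stable coefficient equals the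
coefficient of q^d in ∑_{j=-∞}^{∞} (-1)^j q^{j(3j-1)/2}, i.e. the (finite) sum of
(-1)^j over all integers j with j(3j-1)/2 = d. -/
theorem pentagonal_number_theorem :
    (∀ d M : ℕ, d ≤ M →
      (PowerSeries.coeff (R := ℤ) d) (∏ k ∈ Finset.Icc 1 M, (1 - PowerSeries.X ^ k)) =
      (PowerSeries.coeff (R := ℤ) d) (∏ k ∈ Finset.Icc 1 d, (1 - PowerSeries.X ^ k))) ∧
    (∀ d : ℕ,
      (PowerSeries.coeff (R := ℤ) d) (∏ k ∈ Finset.Icc 1 d, (1 - PowerSeries.X ^ k)) =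
      ∑ j ∈ Finset.Icc (-(d : ℤ)) (d : ℤ),
        if (j * (3 * j - 1)) / 2 = (d : ℤ) then (j.negOnePow : ℤ) else 0) := by
  exact ⟨fun d M h => Pent.part1 d M h, fun d => Pent.part2 d⟩
end

section
/- Let f, g, h be formal Laurent series over ℤ with h a unit (invertible) and f = g / h. If g' and h' are Laurent series agreeing with g and h respectively in all coefficients of the top n degrees (after normalizing leading degrees), with h' also a unit, then g'/h' agrees with f in its top n coefficients. Equivalently: if g ≡ g' and h ≡ h' modulo terms of degree at most (top degree − n), and the leading coefficients of h, h' are units, then g/h ≡ g'/h' modulo terms of degree at most (top degree of f − n). -/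
/- Lemma 4.1 of the paper: truncation to the top n coefficients is compatible with
division. Formal Laurent series normalized so that the top degree is degree 0 are
power series in x = q^{-1}; "agreeing in the top n coefficients" means the
coefficients of x^0, …, x^{n-1} agree. If f = g/h with h a unit, and g', h' agree
with g, h in the top n coefficients (h' also a unit), then g'/h' agrees with f in
its top n coefficients. -/
theorem truncation_compatible_with_division (n : ℕ) (f g g' h h' : PowerSeries ℤ)
    (hu : IsUnit h) (hu' : IsUnit h')
    (hf : f * h = g)
    (hg : ∀ k < n, PowerSeries.coeff k g = PowerSeries.coeff k g')
    (hh : ∀ k < n, PowerSeries.coeff k h = PowerSeries.coeff k h') :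
    ∀ k < n, PowerSeries.coeff k f = PowerSeries.coeff k (g' * Ring.inverse h') := by
  set f' := g' * Ring.inverse h' with hf'def
  have hf' : f' * h' = g' := by
    rw [hf'def, mul_assoc, Ring.inverse_mul_cancel _ hu', mul_one]
  have h0 : IsUnit (PowerSeries.constantCoeff h) := by
    rcases hu with ⟨u, rfl⟩
    exact ⟨Units.map (PowerSeries.constantCoeff).toMonoidHom u, rfl⟩
  intro k
  induction k using Nat.strong_induction_on with
  | _ k ih =>
    intro hk
    have e1 : PowerSeries.coeff k (f * h) = PowerSeries.coeff k g := by rw [hf]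
    have e2 : PowerSeries.coeff k (f' * h') = PowerSeries.coeff k g' := by rw [hf']
    rw [PowerSeries.coeff_mul, Finset.Nat.sum_antidiagonal_eq_sum_range_succ
      (fun i j => PowerSeries.coeff i f * PowerSeries.coeff j h),
      Finset.sum_range_succ] at e1
    rw [PowerSeries.coeff_mul, Finset.Nat.sum_antidiagonal_eq_sum_range_succ
      (fun i j => PowerSeries.coeff i f' * PowerSeries.coeff j h'),
      Finset.sum_range_succ] at e2
    have hsum : ∑ i ∈ Finset.range k, PowerSeries.coeff i f * PowerSeries.coeff (k - i) h
        = ∑ i ∈ Finset.range k, PowerSeries.coeff i f' * PowerSeries.coeff (k - i) h' := by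
      refine Finset.sum_congr rfl fun i hi => ?_
      have hik : i < k := Finset.mem_range.mp hi
      rw [ih i hik (hik.trans hk), hh (k - i) (lt_of_le_of_lt (Nat.sub_le _ _) hk)]
    have hkey : PowerSeries.coeff k f * PowerSeries.coeff (k - k) h
        = PowerSeries.coeff k f' * PowerSeries.coeff (k - k) h' := by
      have := e1.trans ((hg k hk).trans e2.symm)
      rw [hsum] at this
      exact add_left_cancel this
    rw [Nat.sub_self] at hkey
    have hc : PowerSeries.coeff 0 h = PowerSeries.coeff 0 h' := hh 0 (Nat.zero_lt_of_lt hk)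
    rw [← hc] at hkey
    have h0' : IsUnit (PowerSeries.coeff 0 h) := by
      rwa [PowerSeries.coeff_zero_eq_constantCoeff]
    exact h0'.mul_left_cancel (by rw [mul_comm, hkey, mul_comm])
end

section
/- Define the quantum integer {n} = A^{2n} − A^{−2n} in ℤ[A, A^{−1}] and the quantum factorial {n}! = {n}{n−1}⋯{1}. Then for every N ≥ 1, the Laurent polynomial {2N}! agrees with (−1)^N A^{−(3N²+N)} {N}! · (1 − ∑_{i=1}^{N} A^{4(N+i)}) in all coefficients of the 4(2N+1) lowest A-degrees; equivalently, writing q = A^{−4}, {2N}! agrees with (−1)^N q^{(3N²+N)/4} {N}! (1 − (q^{−N−1} − q^{−2N−1})/(1 − q^{−1})) in the 2N+1 highest q-degree coefficients. -/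
/- Quantum integers and factorials as Laurent polynomials in A, regarded inside the
ring of formal Laurent series in A (so that coefficients can be extracted):
{n} = A^{2n} - A^{-2n}, {n}! = {n}{n-1}⋯{1}. -/

/-- The monomial A^d. -/
noncomputable def Amon (d : ℤ) : LaurentSeries ℤ := HahnSeries.single d 1

/-- The quantum integer {n} = A^{2n} - A^{-2n}. -/
noncomputable def qInt (n : ℕ) : LaurentSeries ℤ := Amon (2 * n) - Amon (-(2 * n))

/-- The quantum factorial {n}! = ∏_{k=1}^{n} {k}. -/
noncomputable def qFac (n : ℕ) : LaurentSeries ℤ := ∏ k ∈ Finset.Icc 1 n, qInt k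

open Polynomial in
/-- Evaluation of an integer polynomial at `A^4`. -/
noncomputable def psi : Polynomial ℤ →+* LaurentSeries ℤ :=
  Polynomial.eval₂RingHom (Int.castRingHom (LaurentSeries ℤ)) (Amon 4)

lemma Amon_mul (a b : ℤ) : Amon a * Amon b = Amon (a + b) := by
  simp [Amon, HahnSeries.single_mul_single]

lemma Amon_zero : Amon 0 = 1 := rfl

lemma Amon_pow (a : ℤ) (n : ℕ) : Amon a ^ n = Amon (n * a) := by
  simp [Amon, HahnSeries.single_pow, zsmul_eq_mul]

lemma psi_X_pow (k : ℕ) : psi (Polynomial.X ^ k) = Amon (4 * k) := by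
  simp [psi, Amon_pow, mul_comm]

lemma psi_coeff_neg (p : Polynomial ℤ) (d : ℤ) (hd : d < 0) : (psi p).coeff d = 0 := by
  rw [psi, Polynomial.coe_eval₂RingHom, Polynomial.eval₂_eq_sum, Polynomial.sum]
  rw [← HahnSeries.coeff.addMonoidHom_apply, map_sum]
  refine Finset.sum_eq_zero fun e _ => ?_
  have h1 : ((Int.castRingHom (LaurentSeries ℤ)) (p.coeff e)) = HahnSeries.single (0:ℤ) (p.coeff e) := by
    rw [RingHom.congr_fun (RingHom.ext_int (Int.castRingHom (LaurentSeries ℤ)) HahnSeries.C) (p.coeff e), HahnSeries.C_apply]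
  rw [HahnSeries.coeff.addMonoidHom_apply, h1, Amon_pow]
  rw [Amon, HahnSeries.single_mul_single]
  rw [HahnSeries.coeff_single_of_ne]
  omega

lemma Amon_prod {s : Finset ℕ} (f : ℕ → ℤ) :
    ∏ k ∈ s, Amon (f k) = Amon (∑ k ∈ s, f k) := by
  induction s using Finset.cons_induction with
  | empty => simp [Amon_zero]
  | cons a s ha ih => rw [Finset.prod_cons, Finset.sum_cons, ih, Amon_mul]

lemma sum_two_mul (n : ℕ) : (∑ k ∈ Finset.Icc 1 n, (2 * (k:ℤ))) = n * (n + 1) := by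
  induction n with
  | zero => simp
  | succ n ih =>
    rw [Finset.sum_Icc_succ_top (by omega)]
    push_cast
    push_cast at ih
    rw [ih]; ring

lemma qFac_eq (n : ℕ) :
    qFac n = Amon (-(n * (n + 1))) * psi (∏ k ∈ Finset.Icc 1 n, (Polynomial.X ^ k - 1)) := by
  have h : ∀ k : ℕ, qInt k = Amon (-(2 * k)) * psi (Polynomial.X ^ k - 1) := by
    intro k
    rw [map_sub, psi_X_pow, map_one, qInt, mul_sub, mul_one, Amon_mul]
    ring_nf
  rw [qFac, map_prod]
  calc ∏ k ∈ Finset.Icc 1 n, qInt k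
      = ∏ k ∈ Finset.Icc 1 n, (Amon (-(2 * k)) * psi (Polynomial.X ^ k - 1)) := by
        exact Finset.prod_congr rfl fun k _ => h k
    _ = (∏ k ∈ Finset.Icc 1 n, Amon (-(2 * (k:ℤ)))) *
          ∏ k ∈ Finset.Icc 1 n, psi (Polynomial.X ^ k - 1) := Finset.prod_mul_distrib
    _ = _ := by
        rw [Amon_prod, Finset.sum_neg_distrib, sum_two_mul]

open Polynomial in
/-- Key polynomial congruence: if all elements of `s` are at least `t` and `m ≤ 2t`,
then `∏_{k∈s}(X^k-1) ≡ (-1)^|s| (1 - ∑_{k∈s} X^k)  mod X^m`. -/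
lemma key (t m : ℕ) (hm : m ≤ 2 * t) (s : Finset ℕ) (hs : ∀ k ∈ s, t ≤ k) :
    (X : Polynomial ℤ) ^ m ∣
      ∏ k ∈ s, ((X:Polynomial ℤ) ^ k - 1) - (-1) ^ s.card * (1 - ∑ k ∈ s, (X:Polynomial ℤ) ^ k) := by
  induction s using Finset.cons_induction with
  | empty => simp
  | cons a s ha ih =>
    have hs' : ∀ k ∈ s, t ≤ k := fun k hk => hs k (Finset.mem_cons_of_mem hk)
    obtain ⟨r, hr⟩ := ih hs'
    obtain ⟨u, hu⟩ : (X : Polynomial ℤ) ^ m ∣ X ^ a * ∑ k ∈ s, (X:Polynomial ℤ) ^ k := by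
      rw [Finset.mul_sum]
      refine Finset.dvd_sum fun k hk => ?_
      rw [← pow_add]
      exact pow_dvd_pow X (by
        have h1 := hs a (Finset.mem_cons_self a s)
        have h2 := hs' k hk
        omega)
    refine ⟨(X ^ a - 1) * r - (-1) ^ s.card * u, ?_⟩
    rw [Finset.prod_cons, Finset.sum_cons, Finset.card_cons]
    linear_combination (X ^ a - 1 : Polynomial ℤ) * hr - (-1 : Polynomial ℤ) ^ s.card * hu

open Polynomial in
theorem qFac_two_mul_truncation (N : ℕ) (hN : 1 ≤ N) :
    ∀ d : ℤ, d < -(2 * (N : ℤ) * (2 * N + 1)) + 4 * (2 * (N : ℤ) + 1) →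
      (qFac (2 * N)).coeff d =
      ((-1) ^ N * Amon (-(3 * (N : ℤ) ^ 2 + N)) * qFac N *
        (1 - ∑ i ∈ Finset.Icc 1 N, Amon (4 * ((N : ℤ) + i)))).coeff d := by
  intro d hd
  set e : ℤ := -(2 * (N : ℤ) * (2 * (N : ℤ) + 1)) with he
  set PN : Polynomial ℤ := ∏ k ∈ Finset.Icc 1 N, (X ^ k - 1) with hPN
  set P2 : Polynomial ℤ := ∏ k ∈ Finset.Icc 1 (2*N), (X ^ k - 1) with hP2
  set S : Polynomial ℤ := ∑ i ∈ Finset.Icc 1 N, (X:Polynomial ℤ) ^ (N + i) with hS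
  set Q : Polynomial ℤ := (-1)^N * (PN * (1 - S)) with hQ
  -- the divisibility
  have hsplit : P2 = PN * ∏ k ∈ Finset.Ioc N (2*N), ((X:Polynomial ℤ) ^ k - 1) := by
    rw [hP2, hPN, show Finset.Icc 1 (2*N) = Finset.Ioc 0 (2*N) from Finset.Icc_add_one_left_eq_Ioc 0 (2*N),
      show Finset.Icc 1 N = Finset.Ioc 0 N from Finset.Icc_add_one_left_eq_Ioc 0 N,
      Finset.prod_Ioc_consecutive _ (Nat.zero_le N) (by omega)]
  have hcard : (Finset.Ioc N (2*N)).card = N := by rw [Nat.card_Ioc]; omega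
  have hsum : ∑ k ∈ Finset.Ioc N (2*N), (X:Polynomial ℤ) ^ k = S := by
    have hmap : Finset.Ioc N (2*N) = Finset.map (addLeftEmbedding N) (Finset.Icc 1 N) := by
      rw [Finset.map_add_left_Icc, ← Finset.Icc_add_one_left_eq_Ioc]
      congr 1 <;> omega
    rw [hmap, Finset.sum_map, hS]
    rfl
  have h1 := key (N+1) (2*N+1) (by omega) (Finset.Ioc N (2*N))
    (fun k hk => by simp only [Finset.mem_Ioc] at hk; omega)
  rw [hcard, hsum] at h1
  have hdvd : (X : Polynomial ℤ) ^ (2*N+1) ∣ P2 - Q := by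
    have heq : P2 - Q
        = PN * ((∏ k ∈ Finset.Ioc N (2*N), ((X:Polynomial ℤ) ^ k - 1)) - (-1)^N * (1 - S)) := by
      rw [hsplit, hQ]; ring
    rw [heq]
    exact h1.mul_left PN
  -- express both sides
  have hLHS : qFac (2*N) = Amon e * psi P2 := by
    rw [qFac_eq (2*N), show -(((2*N:ℕ):ℤ) * (((2*N:ℕ):ℤ) + 1)) = e by push_cast [he]; ring]
  have hSser : (1 - ∑ i ∈ Finset.Icc 1 N, Amon (4 * ((N:ℤ) + i))) = psi (1 - S) := by
    rw [map_sub, map_one, hS, map_sum]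
    congr 1
    refine Finset.sum_congr rfl fun i _ => ?_
    rw [psi_X_pow]
    norm_cast
  have hAm : Amon (-(3*(N:ℤ)^2 + N)) * Amon (-((N:ℤ) * ((N:ℤ) + 1))) = Amon e := by
    rw [Amon_mul]
    congr 1
    rw [he]; ring
  have hRHS : ((-1) ^ N * Amon (-(3 * (N : ℤ) ^ 2 + N)) * qFac N *
        (1 - ∑ i ∈ Finset.Icc 1 N, Amon (4 * ((N : ℤ) + i)))) = Amon e * psi Q := by
    rw [qFac_eq N, hSser, hQ, map_mul, map_mul, show ((-1:Polynomial ℤ)^N : Polynomial ℤ) = ((-1)^N : Polynomial ℤ) from rfl]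
    have hneg : (psi ((-1)^N : Polynomial ℤ)) = ((-1:LaurentSeries ℤ))^N := by
      rw [map_pow, map_neg, map_one]
    rw [hneg]
    calc (-1:LaurentSeries ℤ) ^ N * Amon (-(3 * (N:ℤ) ^ 2 + (N:ℤ))) *
          (Amon (-((N:ℤ) * ((N:ℤ) + 1))) * psi PN) * psi (1 - S)
        = (Amon (-(3*(N:ℤ)^2 + (N:ℤ))) * Amon (-((N:ℤ) * ((N:ℤ) + 1)))) *
            ((-1:LaurentSeries ℤ)^N * (psi PN * psi (1 - S))) := by ring
      _ = Amon e * ((-1:LaurentSeries ℤ)^N * (psi PN * psi (1 - S))) := by rw [hAm]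
  -- conclude
  obtain ⟨r, hr⟩ := hdvd
  rw [hLHS, hRHS, ← sub_eq_zero, ← HahnSeries.coeff_sub, ← mul_sub, ← map_sub]
  have hfin : Amon e * psi (P2 - Q) = Amon (e + 4*(2*(N:ℤ)+1)) * psi r := by
    rw [hr, map_mul, psi_X_pow, ← mul_assoc, Amon_mul]
    norm_cast
  rw [hfin, show d = (d - (e + 4*(2*(N:ℤ)+1))) + (e + 4*(2*(N:ℤ)+1)) by ring]
  rw [Amon, HahnSeries.coeff_single_mul_add, one_mul, psi_coeff_neg _ _ (by rw [he] at hd ⊢; linarith)]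
end

section
/- With {n} = A^{2n} − A^{−2n} and q = A^{−4}: for every N ≥ 1, ({2N}!)² agrees with q^{(3N²+N)/2} ({N}!)² · (1 − 2q^{−N−1} · ∑_{k≥0} q^{−k}) in the 2N+1 highest q-degree coefficients, i.e. ({2N}!)² ≐_{2N+1} q^{(3N²+N)/2}({N}!)²(1 − 2q^{−N−1}/(1−q^{−1})) where 1/(1−q^{−1}) is expanded as a formal power series in q^{−1}. -/
open PowerSeries Finset

noncomputable abbrev G : PowerSeries ℤ := PowerSeries.mk (fun _ => (1 : ℤ))

lemma hgeom : (1 - PowerSeries.X) * G = 1 := by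
  ext n
  cases n with
  | zero => simp
  | succ n => simp [sub_mul, PowerSeries.coeff_succ_X_mul]

lemma sumIco (a : ℕ) : ∀ b, a ≤ b →
    (∑ k ∈ Finset.Ico a b, (PowerSeries.X : PowerSeries ℤ) ^ k) = X ^ a * G - X ^ b * G := by
  intro b hb
  induction b, hb using Nat.le_induction with
  | base => simp
  | succ m hm ih =>
      rw [Finset.sum_Ico_succ_top hm, ih, pow_succ]
      linear_combination (-(X : PowerSeries ℤ) ^ m) * hgeom

lemma prodTrunc (N : ℕ) : ∀ m, N ≤ m →
    (PowerSeries.X : PowerSeries ℤ) ^ (2 * N + 2) ∣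
      (∏ k ∈ Finset.Icc (N + 1) m, (1 - PowerSeries.X ^ k)) -
      (1 - ∑ k ∈ Finset.Icc (N + 1) m, PowerSeries.X ^ k) := by
  intro m hm
  induction m, hm using Nat.le_induction with
  | base => simp
  | succ m hm ih =>
      obtain ⟨D, hD⟩ := ih
      have hins : Finset.Icc (N + 1) (m + 1) = insert (m + 1) (Finset.Icc (N + 1) m) := by
        exact (Finset.insert_Icc_right_eq_Icc_add_one (by omega)).symm
      have hSdvd : (X : PowerSeries ℤ) ^ (N + 1) ∣ ∑ k ∈ Finset.Icc (N + 1) m, X ^ k :=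
        Finset.dvd_sum fun k hk => pow_dvd_pow X (Finset.mem_Icc.mp hk).1
      obtain ⟨s, hs⟩ := hSdvd
      have hprev : (∏ k ∈ Finset.Icc (N + 1) m, (1 - (X : PowerSeries ℤ) ^ k)) =
          (1 - ∑ k ∈ Finset.Icc (N + 1) m, X ^ k) + X ^ (2 * N + 2) * D := by
        linear_combination hD
      rw [hins, Finset.prod_insert (by simp), Finset.sum_insert (by simp), hprev]
      have key : (1 - (X : PowerSeries ℤ) ^ (m + 1)) *
          ((1 - ∑ k ∈ Finset.Icc (N + 1) m, X ^ k) + X ^ (2 * N + 2) * D) -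
          (1 - (X ^ (m + 1) + ∑ k ∈ Finset.Icc (N + 1) m, X ^ k)) =
          X ^ (2 * N + 2) * ((1 - X ^ (m + 1)) * D) +
          X ^ (N + 1) * X ^ (m + 1) * s := by
        rw [hs]; ring
      rw [key]
      refine dvd_add (Dvd.intro _ rfl) ?_
      have : (X : PowerSeries ℤ) ^ (2 * N + 2) ∣ X ^ (N + 1) * X ^ (m + 1) := by
        rw [← pow_add]; exact pow_dvd_pow X (by omega)
      exact this.mul_right s


/- Corollary 4.3 of the paper: ({2N}!)² ≐_{2N+1} q^{(3N²+N)/2} ({N}!)² (1 - 2q^{-N-1}/(1-q^{-1})).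
Both sides are normalized to have top q-degree 0 and are then formal power series in
x = q^{-1}: using (-1)^M {M}! = q^{M(M+1)/4} ∏_{k=1}^{M}(1-q^{-k}), the relation
≐_{2N+1} (agreement of the 2N+1 highest q-degree coefficients) becomes: the
coefficients of x^0, x^1, …, x^{2N} of ∏_{k=1}^{2N}(1-x^k)² and of
∏_{k=1}^{N}(1-x^k)² · (1 - 2 x^{N+1} · ∑_{k≥0} x^k) agree, where the geometric
series ∑_{k≥0} x^k is the power-series expansion of 1/(1-q^{-1}). -/
theorem qFac_two_mul_sq_truncation (N : ℕ) (hN : 1 ≤ N) :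
    ∀ d : ℕ, d < 2 * N + 1 →
      (PowerSeries.coeff (R := ℤ) d) ((∏ k ∈ Finset.Icc 1 (2 * N), (1 - PowerSeries.X ^ k)) ^ 2) =
      (PowerSeries.coeff (R := ℤ) d) ((∏ k ∈ Finset.Icc 1 N, (1 - PowerSeries.X ^ k)) ^ 2 *
        (1 - 2 * PowerSeries.X ^ (N + 1) * PowerSeries.mk (fun _ => (1 : ℤ)))) := by
  set P : PowerSeries ℤ := ∏ k ∈ Finset.Icc 1 N, (1 - X ^ k) with hP
  set Q : PowerSeries ℤ := ∏ k ∈ Finset.Icc (N + 1) (2 * N), (1 - X ^ k) with hQdef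
  set S : PowerSeries ℤ := ∑ k ∈ Finset.Icc (N + 1) (2 * N), X ^ k with hSdef
  have hsplit : (∏ k ∈ Finset.Icc 1 (2 * N), (1 - (X : PowerSeries ℤ) ^ k)) = P * Q := by
    rw [hP, hQdef, Finset.Icc_add_one_left_eq_Ioc, ← zero_add 1, Finset.Icc_add_one_left_eq_Ioc, Finset.Icc_add_one_left_eq_Ioc (a := 0)]
    exact (Finset.prod_Ioc_consecutive _ (Nat.zero_le N) (by omega)).symm
  obtain ⟨D, hD⟩ := prodTrunc N (2 * N) (by omega)
  have hSd : (X : PowerSeries ℤ) ^ (N + 1) ∣ S :=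
    Finset.dvd_sum fun k hk => pow_dvd_pow X (Finset.mem_Icc.mp hk).1
  obtain ⟨s, hs⟩ := hSd
  have hSG : S = X ^ (N + 1) * G - X ^ (2 * N + 1) * G := by
    rw [hSdef, ← Finset.Ico_add_one_right_eq_Icc]
    exact sumIco (N + 1) (2 * N + 1) (by omega)
  have hexp : (P * Q) ^ 2 - P ^ 2 * (1 - 2 * X ^ (N + 1) * G) =
      X ^ (2 * N + 1) * (P ^ 2 * (X * (D * (Q + (1 - S))) + X * (s * s) + 2 * G)) := by
    linear_combination (P ^ 2 * (Q + (1 - S))) * hD + (P ^ 2 * (S + X ^ (N + 1) * s)) * hs +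
      (-2 * P ^ 2 : PowerSeries ℤ) * hSG
  intro d hd
  rw [hsplit, ← sub_eq_zero, ← map_sub]
  exact PowerSeries.X_pow_dvd_iff.mp ⟨_, hexp⟩ d hd
end
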